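/- If C is a symmetric monoidal category then C_{P_ω}, with tensor on morphisms U ⊗ U' = {u ⊗ u' | u ∈ U, u' ∈ U'}, is a symmetric monoidal category; if C is dagger compact closed then C_{P_ω} is dagger compact closed with U† = {u† | u ∈ U}. -/

import Mathlib

open CategoryTheory MonoidalCategory

attribute [local instance] Classical.decEq

universe v u

/-- `CP C` (written `C_{P_ω}`) has the same objects as `C`; its hom-sets are the finite
subsets of the hom-sets of `C`. -/
def CP (C : Type u) : Type u := C

/-- The object of `C_{P_ω}` corresponding to an object of `C`. -/
def CP.mk {C : Type u} (X : C) : CP C := X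

/-- The object of `C` underlying an object of `C_{P_ω}`. -/
def CP.un {C : Type u} (X : CP C) : C := X

instance CP.quiver {C : Type u} [Category.{v} C] : Quiver.{v} (CP C) :=
  ⟨fun A B => Finset (A.un ⟶ B.un)⟩

noncomputable instance CP.categoryStruct {C : Type u} [Category.{v} C] :
    CategoryStruct.{v} (CP C) where
  id A := ({𝟙 A.un} : Finset (A.un ⟶ A.un))
  comp {_ _ _} U V := Finset.image₂ (fun u v => u ≫ v) U V

noncomputable instance CP.category {C : Type u} [Category.{v} C] : Category.{v} (CP C) where
  id_comp U := by
    show Finset.image₂ (fun u v => u ≫ v) {𝟙 _} U = U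
    simp [Finset.image₂_singleton_left]
  comp_id U := by
    show Finset.image₂ (fun u v => u ≫ v) U {𝟙 _} = U
    simp [Finset.image₂_singleton_right]
  assoc U V W := by
    show Finset.image₂ (fun u v => u ≫ v) (Finset.image₂ (fun u v => u ≫ v) U V) W
      = Finset.image₂ (fun u v => u ≫ v) U (Finset.image₂ (fun u v => u ≫ v) V W)
    exact Finset.image₂_assoc fun a b c => Category.assoc a b c

/-- Lift an isomorphism of `C` to an isomorphism of `C_{P_ω}` (singletons). -/
noncomputable def cpIso {C : Type u} [Category.{v} C] {A B : C} (h : A ≅ B) :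
    CP.mk A ≅ CP.mk B where
  hom := ({h.hom} : Finset (A ⟶ B))
  inv := ({h.inv} : Finset (B ⟶ A))
  hom_inv_id := by
    show Finset.image₂ (fun u v => u ≫ v) {h.hom} {h.inv} = ({𝟙 A} : Finset (A ⟶ A))
    simp
  inv_hom_id := by
    show Finset.image₂ (fun u v => u ≫ v) {h.inv} {h.hom} = ({𝟙 B} : Finset (B ⟶ B))
    simp

/-- The monoidal data on `C_{P_ω}`: the tensor of morphisms is elementwise,
`U ⊗ U' = {u ⊗ u' | u ∈ U, u' ∈ U'}`; unit, associator and unitors are inherited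
from `C` via singletons. -/
noncomputable instance cpMonStruct (C : Type u) [Category.{v} C] [MonoidalCategory C] :
    MonoidalCategoryStruct (CP C) where
  tensorObj X Y := CP.mk (X.un ⊗ Y.un)
  whiskerLeft X {_ _} U := U.image fun g => X.un ◁ g
  whiskerRight {_ _} U Y := U.image fun g => g ▷ Y.un
  tensorHom {_ _ _ _} U V := Finset.image₂ (fun u v => MonoidalCategoryStruct.tensorHom u v) U V
  tensorUnit := CP.mk (𝟙_ C)
  associator X Y Z := cpIso (α_ X.un Y.un Z.un)
  leftUnitor X := cpIso (λ_ X.un)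
  rightUnitor X := cpIso (ρ_ X.un)

/-- Compact closed data: duals, cups (coevaluations) and caps (evaluations). -/
structure CCData (C : Type u) [Category.{v} C] [MonoidalCategoryStruct C] where
  dual : C → C
  coev : ∀ A : C, 𝟙_ C ⟶ A ⊗ dual A
  ev : ∀ A : C, dual A ⊗ A ⟶ 𝟙_ C

/-- The snake (zig-zag) equations. -/
def IsCompactClosed {C : Type u} [Category.{v} C] [MonoidalCategoryStruct C]
    (d : CCData C) : Prop :=
  (∀ A : C, (λ_ A).inv ≫ (d.coev A ▷ A) ≫ (α_ A (d.dual A) A).hom ≫ (A ◁ d.ev A) ≫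
      (ρ_ A).hom = 𝟙 A) ∧
  (∀ A : C, (ρ_ (d.dual A)).inv ≫ (d.dual A ◁ d.coev A) ≫
      (α_ (d.dual A) A (d.dual A)).inv ≫ (d.ev A ▷ d.dual A) ≫ (λ_ (d.dual A)).hom
      = 𝟙 (d.dual A))

/-- A dagger: an operation reversing morphisms. -/
structure DagData (C : Type u) [Category.{v} C] where
  dag : ∀ {A B : C}, (A ⟶ B) → (B ⟶ A)

/-- The dagger axioms: identity-on-objects involutive contravariant functor compatible
with the tensor. -/
def IsDagger {C : Type u} [Category.{v} C] [MonoidalCategoryStruct C]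
    (D : DagData C) : Prop :=
  (∀ A : C, D.dag (𝟙 A) = 𝟙 A) ∧
  (∀ {A B E : C} (f : A ⟶ B) (g : B ⟶ E), D.dag (f ≫ g) = D.dag g ≫ D.dag f) ∧
  (∀ {A B : C} (f : A ⟶ B), D.dag (D.dag f) = f) ∧
  (∀ {A B A' B' : C} (f : A ⟶ B) (g : A' ⟶ B'),
    D.dag (MonoidalCategoryStruct.tensorHom f g)
      = MonoidalCategoryStruct.tensorHom (D.dag f) (D.dag g))

/-- The compact closed data on `C_{P_ω}`: singletons of the cups and caps of `C`. -/
noncomputable def cpCC {C : Type u} [Category.{v} C] [MonoidalCategory C] (d : CCData C) :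
    CCData (CP C) where
  dual A := CP.mk (d.dual A.un)
  coev A := ({d.coev A.un} : Finset _)
  ev A := ({d.ev A.un} : Finset _)

/-- The dagger on `C_{P_ω}`: `U† = {u† | u ∈ U}`. -/
noncomputable def cpDag {C : Type u} [Category.{v} C] (D : DagData C) : DagData (CP C) where
  dag {_ _} U := U.image D.dag

attribute [reducible] CP.un CP.mk

section Aux

variable {C : Type u} [Category.{v} C]

lemma CP.comp_def {A B E : CP C} (U : A ⟶ B) (V : B ⟶ E) :
    U ≫ V = Finset.image₂ (fun u v => u ≫ v) U V := rfl

lemma CP.id_def (A : CP C) : 𝟙 A = ({𝟙 A.un} : Finset _) := rfl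

variable [MonoidalCategory C]

lemma CP.wl_def (X : CP C) {A B : CP C} (U : A ⟶ B) :
    X ◁ U = U.image (fun g => X.un ◁ g) := rfl

lemma CP.wr_def {A B : CP C} (U : A ⟶ B) (Y : CP C) :
    U ▷ Y = U.image (fun g => g ▷ Y.un) := rfl

lemma CP.tensor_def {A B A' B' : CP C} (U : A ⟶ B) (V : A' ⟶ B') :
    U ⊗ₘ V = Finset.image₂ (fun (u : A.un ⟶ B.un) (v : A'.un ⟶ B'.un) =>
      MonoidalCategoryStruct.tensorHom u v) U V := rfl

lemma CP.un_tensor (X Y : CP C) : (X ⊗ Y).un = X.un ⊗ Y.un := rfl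

omit [Category.{v, u} C] [MonoidalCategory C] in
lemma CP.un_mk (X : C) : (CP.mk X).un = X := rfl

lemma CP.un_unit : (𝟙_ (CP C)).un = 𝟙_ C := rfl

lemma CP.assoc_hom (X Y Z : CP C) :
    (α_ X Y Z).hom = ({(α_ X.un Y.un Z.un).hom} : Finset _) := rfl

lemma CP.assoc_inv (X Y Z : CP C) :
    (α_ X Y Z).inv = ({(α_ X.un Y.un Z.un).inv} : Finset _) := rfl

lemma CP.lu_hom (X : CP C) : (λ_ X).hom = ({(λ_ X.un).hom} : Finset _) := rfl
lemma CP.lu_inv (X : CP C) : (λ_ X).inv = ({(λ_ X.un).inv} : Finset _) := rfl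
lemma CP.ru_hom (X : CP C) : (ρ_ X).hom = ({(ρ_ X.un).hom} : Finset _) := rfl
lemma CP.ru_inv (X : CP C) : (ρ_ X).inv = ({(ρ_ X.un).inv} : Finset _) := rfl

attribute [local simp] CP.comp_def CP.id_def CP.wl_def CP.wr_def CP.tensor_def
  CP.assoc_hom CP.assoc_inv CP.lu_hom CP.lu_inv CP.ru_hom CP.ru_inv

/-- The monoidal category structure on `C_{P_ω}`. -/
noncomputable instance cpMon (C : Type u) [Category.{v} C] [MonoidalCategory C] :
    MonoidalCategory (CP C) where
  __ := cpMonStruct C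
  tensorHom_def {X₁ Y₁ X₂ Y₂} U V := by
    simp only [CP.tensor_def, CP.comp_def, CP.wl_def, CP.wr_def, Finset.image₂_image_left,
      Finset.image₂_image_right]
    exact Finset.image₂_congr' fun u v => MonoidalCategory.tensorHom_def u v
  id_tensorHom_id X₁ X₂ := by
    simp [MonoidalCategory.id_tensorHom_id]
    rfl
  tensorHom_comp_tensorHom {X₁ Y₁ Z₁ X₂ Y₂ Z₂} U₁ U₂ V₁ V₂ := by
    refine Finset.ext fun x => ?_
    simp only [CP.tensor_def, CP.comp_def, Finset.mem_image₂]
    constructor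
    · rintro ⟨-, ⟨f₁, hf₁, f₂, hf₂, rfl⟩, -, ⟨g₁, hg₁, g₂, hg₂, rfl⟩, rfl⟩
      exact ⟨f₁ ≫ g₁, ⟨f₁, hf₁, g₁, hg₁, rfl⟩, f₂ ≫ g₂, ⟨f₂, hf₂, g₂, hg₂, rfl⟩,
        (MonoidalCategory.tensorHom_comp_tensorHom f₁ f₂ g₁ g₂).symm⟩
    · rintro ⟨-, ⟨f₁, hf₁, g₁, hg₁, rfl⟩, -, ⟨f₂, hf₂, g₂, hg₂, rfl⟩, rfl⟩
      exact ⟨f₁ ⊗ₘ f₂, ⟨f₁, hf₁, f₂, hf₂, rfl⟩, g₁ ⊗ₘ g₂, ⟨g₁, hg₁, g₂, hg₂, rfl⟩,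
        MonoidalCategory.tensorHom_comp_tensorHom f₁ f₂ g₁ g₂⟩
  whiskerLeft_id X Y := by simp; rfl
  id_whiskerRight X Y := by simp; rfl
  associator_naturality {X₁ X₂ X₃ Y₁ Y₂ Y₃} U₁ U₂ U₃ := by
    refine Finset.ext fun x => ?_
    simp only [CP.tensor_def, CP.comp_def, CP.assoc_hom, Finset.image₂_singleton_right,
      Finset.image₂_singleton_left, Finset.mem_image, Finset.mem_image₂]
    constructor
    · rintro ⟨-, ⟨-, ⟨f₁, hf₁, f₂, hf₂, rfl⟩, f₃, hf₃, rfl⟩, rfl⟩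
      exact ⟨f₁ ⊗ₘ (f₂ ⊗ₘ f₃), ⟨f₁, hf₁, f₂ ⊗ₘ f₃, ⟨f₂, hf₂, f₃, hf₃, rfl⟩, rfl⟩,
        (MonoidalCategory.associator_naturality f₁ f₂ f₃).symm⟩
    · rintro ⟨-, ⟨f₁, hf₁, -, ⟨f₂, hf₂, f₃, hf₃, rfl⟩, rfl⟩, rfl⟩
      exact ⟨(f₁ ⊗ₘ f₂) ⊗ₘ f₃, ⟨f₁ ⊗ₘ f₂, ⟨f₁, hf₁, f₂, hf₂, rfl⟩, f₃, hf₃, rfl⟩,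
        MonoidalCategory.associator_naturality f₁ f₂ f₃⟩
  leftUnitor_naturality {X Y} U := by
    simp only [CP.comp_def, CP.wl_def, CP.lu_hom, Finset.image₂_singleton_right,
      Finset.image₂_singleton_left, Finset.image_image]
    congr 1
    funext u
    exact MonoidalCategory.leftUnitor_naturality u
  rightUnitor_naturality {X Y} U := by
    simp only [CP.comp_def, CP.wr_def, CP.ru_hom, Finset.image₂_singleton_right,
      Finset.image₂_singleton_left, Finset.image_image]
    congr 1
    funext u
    exact MonoidalCategory.rightUnitor_naturality u
  pentagon W X Y Z := by
    simp [MonoidalCategory.pentagon]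
    exact congrArg _ (MonoidalCategory.pentagon _ _ _ _)
  triangle X Y := by
    simp only [CP.comp_def, CP.wl_def, CP.wr_def, CP.assoc_hom, CP.lu_hom, CP.ru_hom,
      Finset.image_singleton, Finset.image₂_singleton]
    exact congrArg _ (MonoidalCategory.triangle _ _)

lemma cpMon_struct_eq (C : Type u) [Category.{v} C] [MonoidalCategory C] :
    (cpMon C).toMonoidalCategoryStruct = cpMonStruct C := rfl

/-- The symmetric structure on `C_{P_ω}`. -/
noncomputable instance cpSym (C : Type u) [Category.{v} C] [MonoidalCategory C]
    [SymmetricCategory C] : SymmetricCategory (CP C) where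
  braiding X Y := cpIso (β_ X.un Y.un)
  braiding_naturality_right X {Y Z} U := by
    show X ◁ U ≫ (cpIso (β_ X.un Z.un)).hom = (cpIso (β_ X.un Y.un)).hom ≫ U ▷ X
    simp only [cpIso, CP.comp_def, CP.wl_def, CP.wr_def, Finset.image₂_singleton_right,
      Finset.image₂_singleton_left, Finset.image_image]
    congr 1
    funext u
    exact BraidedCategory.braiding_naturality_right X.un u
  braiding_naturality_left {X Y} U Z := by
    show U ▷ Z ≫ (cpIso (β_ Y.un Z.un)).hom = (cpIso (β_ X.un Z.un)).hom ≫ Z ◁ U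
    simp only [cpIso, CP.comp_def, CP.wl_def, CP.wr_def, Finset.image₂_singleton_right,
      Finset.image₂_singleton_left, Finset.image_image]
    congr 1
    funext u
    exact BraidedCategory.braiding_naturality_left u Z.un
  hexagon_forward X Y Z := by
    show (α_ X Y Z).hom ≫ (cpIso (β_ X.un (Y.un ⊗ Z.un))).hom ≫ (α_ Y Z X).hom
      = ((cpIso (β_ X.un Y.un)).hom ▷ Z) ≫ (α_ Y X Z).hom ≫ (Y ◁ (cpIso (β_ X.un Z.un)).hom)
    simp [cpIso, BraidedCategory.hexagon_forward]
  hexagon_reverse X Y Z := by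
    show (α_ X Y Z).inv ≫ (cpIso (β_ (X.un ⊗ Y.un) Z.un)).hom ≫ (α_ Z X Y).inv
      = (X ◁ (cpIso (β_ Y.un Z.un)).hom) ≫ (α_ X Z Y).inv ≫ ((cpIso (β_ X.un Z.un)).hom ▷ Y)
    simp [cpIso, BraidedCategory.hexagon_reverse]
  symmetry X Y := by
    show (cpIso (β_ X.un Y.un)).hom ≫ (cpIso (β_ Y.un X.un)).hom = 𝟙 _
    simp [cpIso]

end Aux

/-- If `C` is a symmetric monoidal category then `C_{P_ω}`, with
elementwise tensor of morphisms, is a symmetric monoidal category (with data exactly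
`cpMonStruct C`); and if `C` is dagger compact closed then `C_{P_ω}` is dagger compact
closed with `U† = {u† | u ∈ U}` and cups and caps the singletons of those of `C`. -/
theorem cp_symmetric_monoidal_dagger_compact (C : Type u) [Category.{v} C]
    [MonoidalCategory C] [SymmetricCategory C] :
    (∃ M : MonoidalCategory (CP C),
      M.toMonoidalCategoryStruct = cpMonStruct C ∧
      ∃ S : @SymmetricCategory (CP C) _ M,
        ∀ X Y : C, HEq (@BraidedCategory.braiding (CP C) _ M S.toBraidedCategory
            (CP.mk X) (CP.mk Y)) (cpIso (β_ X Y))) ∧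
    (∀ (d : CCData C) (D : DagData C), IsCompactClosed d → IsDagger D →
      (∀ A : C, d.ev A = (β_ A (d.dual A)).inv ≫ D.dag (d.coev A)) →
      IsCompactClosed (cpCC d) ∧ IsDagger (cpDag D) ∧
      (∀ A : CP C, (cpCC d).ev A
        = (cpIso (β_ A.un (d.dual A.un))).inv ≫ (cpDag D).dag ((cpCC d).coev A))) := by
  constructor
  · exact ⟨cpMon C, rfl, cpSym C, fun X Y => HEq.rfl⟩
  · rintro d D hc hD hev
    refine ⟨⟨fun A => ?_, fun A => ?_⟩, ⟨fun A => ?_, fun f g => ?_, fun f => ?_, fun f g => ?_⟩,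
      fun A => ?_⟩
    · show ((λ_ A).inv ≫ _ = _)
      simp only [cpCC, CP.comp_def, CP.wl_def, CP.wr_def, CP.lu_inv, CP.ru_hom, CP.assoc_hom,
        CP.id_def, Finset.image_singleton, Finset.image₂_singleton]
      rw [hc.1 A.un]
    · show ((ρ_ _).inv ≫ _ = _)
      simp only [cpCC, CP.comp_def, CP.wl_def, CP.wr_def, CP.ru_inv, CP.lu_hom, CP.assoc_inv,
        CP.id_def, Finset.image_singleton, Finset.image₂_singleton]
      rw [hc.2 A.un]
    · show (cpDag D).dag (𝟙 A) = 𝟙 A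
      simp [cpDag, CP.id_def, hD.1]
    · simp only [cpDag, CP.comp_def, Finset.image_image₂, Finset.image₂_image_left,
        Finset.image₂_image_right]
      rw [Finset.image₂_swap]
      exact Finset.image₂_congr' fun u v => hD.2.1 v u
    · simp only [cpDag]
      simp [Finset.image_image, Function.comp_def, hD.2.2.1]
    · simp only [cpDag, CP.tensor_def, Finset.image_image₂, Finset.image₂_image_left,
        Finset.image₂_image_right]
      exact Finset.image₂_congr' fun u v => hD.2.2.2 u v
    · simp only [cpCC, cpDag, cpIso, CP.comp_def, Finset.image_singleton,
        Finset.image₂_singleton]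
      rw [hev A.un]
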